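/- The function c(s,t) = (1/6)·min(s,t)^2·(3·max(s,t) − min(s,t)) − (1/4)·s^2 t^2 on [0,1]^2 satisfies: for every continuous u on [0,1], the function v(t) = ∫_0^1 c(s,t) u(s) ds is four times continuously differentiable with v'''' = u, v(0) = v'(0) = 0, v'(1) = v'''(1) = 0. -/

import Mathlib

open Set MeasureTheory

theorem stmt12 (u : ℝ → ℝ) (hu : ContinuousOn u (Set.Icc 0 1))
    (c : ℝ → ℝ → ℝ)
    (hc : ∀ s t : ℝ, c s t = 1/6 * (min s t)^2 * (3 * max s t - min s t) - 1/4 * s^2 * t^2)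
    (v : ℝ → ℝ) (hv : ∀ t : ℝ, v t = ∫ s in (0:ℝ)..1, c s t * u s) :
    ContDiffOn ℝ 4 v (Set.Icc 0 1) ∧
    (∀ t ∈ Set.Icc (0:ℝ) 1, iteratedDerivWithin 4 v (Set.Icc 0 1) t = u t) ∧
    v 0 = 0 ∧ iteratedDerivWithin 1 v (Set.Icc 0 1) 0 = 0 ∧
    iteratedDerivWithin 1 v (Set.Icc 0 1) 1 = 0 ∧
    iteratedDerivWithin 3 v (Set.Icc 0 1) 1 = 0 := by
  have hUD : UniqueDiffOn ℝ (Set.Icc (0:ℝ) 1) := uniqueDiffOn_Icc one_pos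
  have h0S : (0:ℝ) ∈ Set.Icc (0:ℝ) 1 := ⟨le_refl 0, zero_le_one⟩
  have h1S : (1:ℝ) ∈ Set.Icc (0:ℝ) 1 := ⟨zero_le_one, le_refl 1⟩
  set f : ℕ → ℝ → ℝ := fun k s => s^k * u s with hfdef
  have hcont : ∀ k, ContinuousOn (f k) (Set.Icc 0 1) := fun k =>
    ((continuous_pow k).continuousOn).mul hu
  have hint : ∀ k, ∀ a b : ℝ, a ∈ Set.Icc (0:ℝ) 1 → b ∈ Set.Icc (0:ℝ) 1 →
      IntervalIntegrable (f k) volume a b := fun k a b ha hb =>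
    ((hcont k).mono (uIcc_subset_Icc ha hb)).intervalIntegrable
  set F : ℕ → ℝ → ℝ := fun k x => ∫ s in (0:ℝ)..x, f k s with hFdef
  have hFd : ∀ k, ∀ t ∈ Set.Icc (0:ℝ) 1,
      HasDerivWithinAt (F k) (t^k * u t) (Set.Icc 0 1) t := by
    intro k t ht
    haveI : Fact (t ∈ Set.Icc (0:ℝ) 1) := ⟨ht⟩
    exact intervalIntegral.integral_hasDerivWithinAt_right (hint k 0 t h0S ht)
      ((hcont k).stronglyMeasurableAtFilter_nhdsWithin measurableSet_Icc t)
      ((hcont k) t ht)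
  have hF0 : ∀ k, F k 0 = 0 := fun k => intervalIntegral.integral_same
  have hadj : ∀ t ∈ Set.Icc (0:ℝ) 1, ∀ k, (∫ s in t..(1:ℝ), f k s) = F k 1 - F k t := by
    intro t ht k
    have := intervalIntegral.integral_add_adjacent_intervals (hint k 0 t h0S ht)
      (hint k t 1 ht h1S)
    simp only [hFdef]
    linarith [this]
  -- the explicit formula and its derivatives
  set g : ℝ → ℝ := fun t => (t/2)*F 2 t - (1/6)*F 3 t + (t^2/2)*(F 1 1 - F 1 t)
      - (t^3/6)*(F 0 1 - F 0 t) - (t^2/4)*F 2 1 with hgdef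
  set g1 : ℝ → ℝ := fun t => (1/2)*F 2 t + t*(F 1 1 - F 1 t) - (t^2/2)*(F 0 1 - F 0 t)
      - (t/2)*F 2 1 with hg1def
  set g2 : ℝ → ℝ := fun t => (F 1 1 - F 1 t) - t*(F 0 1 - F 0 t) - F 2 1/2 with hg2def
  set g3 : ℝ → ℝ := fun t => F 0 t - F 0 1 with hg3def
  have hEq : Set.EqOn v g (Set.Icc 0 1) := by
    intro t ht
    have hcct : Continuous (fun s => c s t) := by
      simp only [hc]; fun_prop
    have hcu : ContinuousOn (fun s => c s t * u s) (Set.Icc 0 1) :=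
      (hcct.continuousOn).mul hu
    have hI1 : IntervalIntegrable (fun s => c s t * u s) volume 0 t :=
      (hcu.mono (uIcc_subset_Icc h0S ht)).intervalIntegrable
    have hI2 : IntervalIntegrable (fun s => c s t * u s) volume t 1 :=
      (hcu.mono (uIcc_subset_Icc ht h1S)).intervalIntegrable
    have hvsplit : v t = (∫ s in (0:ℝ)..t, c s t * u s) + ∫ s in t..(1:ℝ), c s t * u s := by
      rw [hv]
      exact (intervalIntegral.integral_add_adjacent_intervals hI1 hI2).symm
    have e1 : (∫ s in (0:ℝ)..t, c s t * u s) = (t/2 - t^2/4) * F 2 t - (1/6) * F 3 t := by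
      have heq : Set.EqOn (fun s => c s t * u s)
          (fun s => (t/2 - t^2/4) * f 2 s - (1/6) * f 3 s) (Set.uIcc 0 t) := by
        intro s hs
        rw [Set.uIcc_of_le ht.1] at hs
        simp only [hc, min_eq_left hs.2, max_eq_right hs.2, hfdef]
        ring
      rw [intervalIntegral.integral_congr heq,
        intervalIntegral.integral_sub ((hint 2 0 t h0S ht).const_mul _)
          ((hint 3 0 t h0S ht).const_mul _),
        intervalIntegral.integral_const_mul, intervalIntegral.integral_const_mul]
    have e2 : (∫ s in t..(1:ℝ), c s t * u s)
        = (t^2/2) * (F 1 1 - F 1 t) - (t^3/6) * (F 0 1 - F 0 t) - (t^2/4) * (F 2 1 - F 2 t) := by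
      have heq : Set.EqOn (fun s => c s t * u s)
          (fun s => ((t^2/2) * f 1 s - (t^3/6) * f 0 s) - (t^2/4) * f 2 s) (Set.uIcc t 1) := by
        intro s hs
        rw [Set.uIcc_of_le ht.2] at hs
        simp only [hc, min_eq_right hs.1, max_eq_left hs.1, hfdef]
        ring
      rw [intervalIntegral.integral_congr heq,
        intervalIntegral.integral_sub (((hint 1 t 1 ht h1S).const_mul _).sub
          ((hint 0 t 1 ht h1S).const_mul _)) ((hint 2 t 1 ht h1S).const_mul _),
        intervalIntegral.integral_sub ((hint 1 t 1 ht h1S).const_mul _)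
          ((hint 0 t 1 ht h1S).const_mul _),
        intervalIntegral.integral_const_mul, intervalIntegral.integral_const_mul,
        intervalIntegral.integral_const_mul, hadj t ht 0, hadj t ht 1, hadj t ht 2]
    rw [hvsplit, e1, e2, hgdef]
    ring
  have hdg : ∀ t ∈ Set.Icc (0:ℝ) 1, HasDerivWithinAt g (g1 t) (Set.Icc 0 1) t := by
    intro t ht
    have h0 := hFd 0 t ht; have h1 := hFd 1 t ht; have h2 := hFd 2 t ht; have h3 := hFd 3 t ht
    have hid : HasDerivWithinAt (fun x : ℝ => x) 1 (Set.Icc 0 1) t :=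
      (hasDerivAt_id t).hasDerivWithinAt
    have hA := (hid.div_const 2).mul h2
    have hB := h3.const_mul (1/6 : ℝ)
    have hC := ((hasDerivAt_pow 2 t).hasDerivWithinAt.div_const 2).mul
      ((hasDerivWithinAt_const t _ (F 1 1)).sub h1)
    have hD := ((hasDerivAt_pow 3 t).hasDerivWithinAt.div_const 6).mul
      ((hasDerivWithinAt_const t _ (F 0 1)).sub h0)
    have hE := (((hasDerivAt_pow 2 t).hasDerivWithinAt (s := Set.Icc 0 1)).div_const 4).mul (hasDerivWithinAt_const t _ (F 2 1))
    have H := ((((hA.sub hB).add hC).sub hD).sub hE)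
    convert H using 1
    · rfl
    · rfl
    · rfl
    simp only [hg1def, Pi.sub_apply]
    push_cast
    ring
  have hdg1 : ∀ t ∈ Set.Icc (0:ℝ) 1, HasDerivWithinAt g1 (g2 t) (Set.Icc 0 1) t := by
    intro t ht
    have h0 := hFd 0 t ht; have h1 := hFd 1 t ht; have h2 := hFd 2 t ht
    have hid : HasDerivWithinAt (fun x : ℝ => x) 1 (Set.Icc 0 1) t :=
      (hasDerivAt_id t).hasDerivWithinAt
    have hA := h2.const_mul (1/2 : ℝ)
    have hB := hid.mul ((hasDerivWithinAt_const t _ (F 1 1)).sub h1)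
    have hC := ((hasDerivAt_pow 2 t).hasDerivWithinAt.div_const 2).mul
      ((hasDerivWithinAt_const t _ (F 0 1)).sub h0)
    have hD := (hid.div_const 2).mul (hasDerivWithinAt_const t (Set.Icc 0 1) (F 2 1))
    have H := (((hA.add hB).sub hC).sub hD)
    convert H using 1
    · rfl
    · rfl
    · rfl
    simp only [hg2def, Pi.sub_apply]
    push_cast
    ring
  have hdg2 : ∀ t ∈ Set.Icc (0:ℝ) 1, HasDerivWithinAt g2 (g3 t) (Set.Icc 0 1) t := by
    intro t ht
    have h0 := hFd 0 t ht; have h1 := hFd 1 t ht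
    have hid : HasDerivWithinAt (fun x : ℝ => x) 1 (Set.Icc 0 1) t :=
      (hasDerivAt_id t).hasDerivWithinAt
    have hA := (hasDerivWithinAt_const t _ (F 1 1)).sub h1
    have hB := hid.mul ((hasDerivWithinAt_const t _ (F 0 1)).sub h0)
    have hC : HasDerivWithinAt (fun _ : ℝ => F 2 1 / 2) 0 (Set.Icc 0 1) t :=
      hasDerivWithinAt_const t _ _
    have H := ((hA.sub hB).sub hC)
    convert H using 1
    · rfl
    · rfl
    · rfl
    simp only [hg3def, Pi.sub_apply]
    ring
  have hdg3 : ∀ t ∈ Set.Icc (0:ℝ) 1, HasDerivWithinAt g3 (u t) (Set.Icc 0 1) t := by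
    intro t ht
    have h0 := hFd 0 t ht
    have H := h0.sub_const (F 0 1)
    convert H using 1
    · rfl
    · rfl
    simp
  have hdv : ∀ t ∈ Set.Icc (0:ℝ) 1, HasDerivWithinAt v (g1 t) (Set.Icc 0 1) t :=
    fun t ht => (hdg t ht).congr hEq (hEq ht)
  have hw1 : Set.EqOn (derivWithin v (Set.Icc 0 1)) g1 (Set.Icc 0 1) :=
    fun t ht => (hdv t ht).derivWithin (hUD t ht)
  have hw2 : Set.EqOn (derivWithin g1 (Set.Icc 0 1)) g2 (Set.Icc 0 1) :=
    fun t ht => (hdg1 t ht).derivWithin (hUD t ht)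
  have hw3 : Set.EqOn (derivWithin g2 (Set.Icc 0 1)) g3 (Set.Icc 0 1) :=
    fun t ht => (hdg2 t ht).derivWithin (hUD t ht)
  have hw4 : Set.EqOn (derivWithin g3 (Set.Icc 0 1)) u (Set.Icc 0 1) :=
    fun t ht => (hdg3 t ht).derivWithin (hUD t ht)
  have hI1 : ∀ t ∈ Set.Icc (0:ℝ) 1, iteratedDerivWithin 1 v (Set.Icc 0 1) t = g1 t := by
    intro t ht
    rw [iteratedDerivWithin_one]
    exact hw1 ht
  have hI2 : ∀ t ∈ Set.Icc (0:ℝ) 1, iteratedDerivWithin 2 v (Set.Icc 0 1) t = g2 t := by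
    intro t ht
    rw [show (2:ℕ) = 1 + 1 from rfl, iteratedDerivWithin_succ,
      derivWithin_congr hI1 (hI1 t ht)]
    exact hw2 ht
  have hI3 : ∀ t ∈ Set.Icc (0:ℝ) 1, iteratedDerivWithin 3 v (Set.Icc 0 1) t = g3 t := by
    intro t ht
    rw [show (3:ℕ) = 2 + 1 from rfl, iteratedDerivWithin_succ,
      derivWithin_congr hI2 (hI2 t ht)]
    exact hw3 ht
  have hI4 : ∀ t ∈ Set.Icc (0:ℝ) 1, iteratedDerivWithin 4 v (Set.Icc 0 1) t = u t := by
    intro t ht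
    rw [show (4:ℕ) = 3 + 1 from rfl, iteratedDerivWithin_succ,
      derivWithin_congr hI3 (hI3 t ht)]
    exact hw4 ht
  have hCstep : ∀ (h h' : ℝ → ℝ) (n : ℕ),
      (∀ t ∈ Set.Icc (0:ℝ) 1, HasDerivWithinAt h (h' t) (Set.Icc 0 1) t) →
      ContDiffOn ℝ n h' (Set.Icc 0 1) → ContDiffOn ℝ (n+1 : ℕ) h (Set.Icc 0 1) := by
    intro h h' n hd hcd
    have : ((n+1 : ℕ) : WithTop ℕ∞) = (n : WithTop ℕ∞) + 1 := by push_cast; rfl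
    rw [this, contDiffOn_succ_iff_derivWithin hUD]
    refine ⟨fun t ht => (hd t ht).differentiableWithinAt, by simp, ?_⟩
    exact hcd.congr (fun t ht => (hd t ht).derivWithin (hUD t ht))
  have hc3 : ContDiffOn ℝ (1:ℕ) g3 (Set.Icc 0 1) :=
    hCstep g3 u 0 hdg3 (by rw [show ((0:ℕ):WithTop ℕ∞) = 0 from rfl, contDiffOn_zero]; exact hu)
  have hc2 : ContDiffOn ℝ (2:ℕ) g2 (Set.Icc 0 1) := hCstep g2 g3 1 hdg2 hc3
  have hc1 : ContDiffOn ℝ (3:ℕ) g1 (Set.Icc 0 1) := hCstep g1 g2 2 hdg1 hc2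
  have hcg : ContDiffOn ℝ (4:ℕ) g (Set.Icc 0 1) := hCstep g g1 3 hdg hc1
  have hcv : ContDiffOn ℝ 4 v (Set.Icc 0 1) := by
    have := hcg.congr hEq
    exact_mod_cast this
  refine ⟨hcv, hI4, ?_, ?_, ?_, ?_⟩
  · rw [hEq h0S, hgdef]
    simp [hF0]
  · rw [hI1 0 h0S, hg1def]
    simp [hF0]
  · rw [hI1 1 h1S, hg1def]
    simp
  · rw [hI3 1 h1S, hg3def]
    simp
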